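/- Suppose W₂(X,Y,Z,W) = 0 for all X,Y,Z,W ∈ V. Then R̄(X,Y,Z,W) = (r/(n(n−1)))[g(Y,Z)g(X,W) − g(X,Z)g(Y,W)] for all X,Y,Z,W ∈ V; that is, substituting the Einstein condition S = (r/n)g (which follows from W₂-flatness) back into the W₂-flatness relation R̄(X,Y,Z,W) = (1/(n−1))[g(Y,Z)S(X,W) − g(X,Z)S(Y,W)] yields constant sectional-curvature form. -/

import Mathlib

open scoped RealInnerProductSpace

lemma expand_aux
    {V : Type*} [NormedAddCommGroup V] [InnerProductSpace ℝ V]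
    {n : ℕ} (e : Module.Basis (Fin n) ℝ V) (he : Orthonormal ℝ e)
    (f : V → ℝ) (hf : ∀ (c : ℝ) (Z Z' : V), f (c • Z + Z') = c * f Z + f Z')
    (Z : V) : f Z = ∑ i, ⟪e i, Z⟫ * f (e i) := by
  have h0 : f 0 = 0 := by
    have := hf 1 0 0
    simp at this
    linarith
  have hadd : ∀ x y : V, f (x + y) = f x + f y := by
    intro x y
    have := hf 1 x y
    simpa using this
  have hsmul : ∀ (c : ℝ) (x : V), f (c • x) = c * f x := by
    intro c x
    have := hf c x 0
    simpa [h0] using this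
  let F : V →ₗ[ℝ] ℝ :=
    { toFun := f
      map_add' := hadd
      map_smul' := hsmul }
  have hZ : (∑ i, ⟪e i, Z⟫ • e i) = Z := by
    have := (e.toOrthonormalBasis he).sum_repr' Z
    simpa [Module.Basis.coe_toOrthonormalBasis] using this
  calc f Z = F Z := rfl
    _ = F (∑ i, ⟪e i, Z⟫ • e i) := by rw [hZ]
    _ = ∑ i, ⟪e i, Z⟫ * f (e i) := by
        rw [map_sum]
        simp [F, hsmul]

theorem stmt17
    {V : Type*} [NormedAddCommGroup V] [InnerProductSpace ℝ V]
    (n : ℕ) (hn : 3 < n)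
    (e : Module.Basis (Fin n) ℝ V) (he : Orthonormal ℝ e)
    (Rb : V → V → V → V → ℝ)
    (hlin1 : ∀ (c : ℝ) (X X' Y Z W : V),
      Rb (c • X + X') Y Z W = c * Rb X Y Z W + Rb X' Y Z W)
    (hlin2 : ∀ (c : ℝ) (X Y Y' Z W : V),
      Rb X (c • Y + Y') Z W = c * Rb X Y Z W + Rb X Y' Z W)
    (hlin3 : ∀ (c : ℝ) (X Y Z Z' W : V),
      Rb X Y (c • Z + Z') W = c * Rb X Y Z W + Rb X Y Z' W)
    (hlin4 : ∀ (c : ℝ) (X Y Z W W' : V),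
      Rb X Y Z (c • W + W') = c * Rb X Y Z W + Rb X Y Z W')
    (hskew1 : ∀ X Y Z W : V, Rb X Y Z W = - Rb Y X Z W)
    (hskew2 : ∀ X Y Z W : V, Rb X Y Z W = - Rb X Y W Z)
    (hpair : ∀ X Y Z W : V, Rb X Y Z W = Rb Z W X Y)
    (S : V → V → ℝ) (hS : ∀ Y Z : V, S Y Z = ∑ i, Rb (e i) Y Z (e i))
    (r : ℝ) (hr : r = ∑ i, S (e i) (e i))
    (W2 : V → V → V → V → ℝ)
    (hW : ∀ X Y Z W : V, W2 X Y Z W =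
      Rb X Y Z W
      + (1 / ((n : ℝ) - 1)) * (⟪X, Z⟫ * S Y W - ⟪Y, Z⟫ * S X W))
    (hflat : ∀ X Y Z W : V, W2 X Y Z W = 0) :
    ∀ X Y Z W : V, Rb X Y Z W =
      (r / ((n : ℝ) * ((n : ℝ) - 1)))
        * (⟪Y, Z⟫ * ⟪X, W⟫ - ⟪X, Z⟫ * ⟪Y, W⟫) := by
  have hn1 : ((n : ℝ) - 1) ≠ 0 := by
    have : (3 : ℝ) < n := by exact_mod_cast hn
    linarith
  have hn0 : (n : ℝ) ≠ 0 := by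
    have : (3 : ℝ) < n := by exact_mod_cast hn
    linarith
  -- key relation from W2-flatness
  have key : ∀ X Y Z W : V,
      Rb X Y Z W = -(1 / ((n : ℝ) - 1)) * (⟪X, Z⟫ * S Y W - ⟪Y, Z⟫ * S X W) := by
    intro X Y Z W
    have h := hflat X Y Z W
    rw [hW] at h
    linarith
  -- S is linear in its second argument
  have hSlin : ∀ (Y : V) (c : ℝ) (Z Z' : V),
      S Y (c • Z + Z') = c * S Y Z + S Y Z' := by
    intro Y c Z Z'
    rw [hS, hS, hS, Finset.mul_sum, ← Finset.sum_add_distrib]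
    exact Finset.sum_congr rfl fun i _ => hlin3 c (e i) Y Z Z' (e i)
  have hSexp : ∀ Y Z : V, (∑ i, ⟪e i, Z⟫ * S Y (e i)) = S Y Z := by
    intro Y Z
    exact (expand_aux e he (S Y) (hSlin Y) Z).symm
  -- Einstein: S = (r/n) g
  have hEin : ∀ Y Z : V, S Y Z = (r / n) * ⟪Y, Z⟫ := by
    intro Y Z
    have h1 : S Y Z
        = -(1 / ((n : ℝ) - 1)) * ((∑ i, ⟪e i, Z⟫ * S Y (e i)) - ⟪Y, Z⟫ * r) := by
      have := Finset.sum_congr rfl fun i (_ : i ∈ Finset.univ) => key (e i) Y Z (e i)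
      rw [hS Y Z, this, ← Finset.mul_sum]
      congr 1
      rw [Finset.sum_sub_distrib, hr, Finset.mul_sum]
    rw [hSexp Y Z] at h1
    field_simp at h1 ⊢
    ring_nf at h1 ⊢
    linarith
  intro X Y Z W
  rw [key X Y Z W, hEin Y W, hEin X W]
  field_simp
  ring
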